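/- Let F be the free group on generators x, y, let n ≥ 1, and let Θ : F → Sym(Fin n) be the homomorphism with Θ(x) = σ the n-cycle (0 1 2 … n−1) and Θ(y) = 1. Then the subgroup H = Θ⁻¹(Stab(n−1)) has index n in F and is generated by the n + 1 elements xⁿ and xˡ y x⁻ˡ for l = 0, 1, …, n−1; moreover H is free of rank n + 1. -/

import Mathlib

open FreeGroup SemidirectProduct Multiplicative

namespace Stmt15Aux

/-- the shift automorphism of the free group on ℤ -/
def shift (a : ℤ) : MulAut (FreeGroup ℤ) := FreeGroup.freeGroupCongr (Equiv.addRight a)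

@[simp] lemma shift_of (a l : ℤ) : shift a (of l) = of (l + a) := rfl

lemma shift_add (a b : ℤ) : shift (a + b) = shift a * shift b := by
  have h : (shift (a+b)).toMonoidHom = ((shift a).toMonoidHom).comp (shift b).toMonoidHom :=
    FreeGroup.ext_hom _ _ fun l => by simp [add_assoc, add_comm a b]
  ext x
  simpa [DFunLike.ext_iff] using DFunLike.congr_fun h x

/-- action of ℤ on FreeGroup ℤ by shifting by multiples of c -/
def A (c : ℤ) : Multiplicative ℤ →* MulAut (FreeGroup ℤ) :=
  MonoidHom.mk' (fun g => shift (c * toAdd g)) (by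
    intro a b
    simp only [toAdd_mul, mul_add, shift_add])

@[simp] lemma A_of (c : ℤ) (g : Multiplicative ℤ) (l : ℤ) :
    A c g (of l) = of (l + c * toAdd g) := rfl

/-- the semidirect products -/
abbrev Gn (c : ℤ) := FreeGroup ℤ ⋊[A c] Multiplicative ℤ

def XX : FreeGroup (Fin 2) := of 0
def YY : FreeGroup (Fin 2) := of 1

def α : FreeGroup (Fin 2) →* Gn 1 :=
  FreeGroup.lift (fun i => if i = 0 then inr (ofAdd 1) else inl (of 0))

@[simp] lemma α_X : α XX = inr (ofAdd 1) := by simp [α, XX]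
@[simp] lemma α_Y : α YY = inl (of 0) := by simp [α, YY]

def βN : FreeGroup ℤ →* FreeGroup (Fin 2) :=
  FreeGroup.lift (fun l => XX ^ l * YY * XX ^ (-l))

@[simp] lemma βN_of (l : ℤ) : βN (of l) = XX ^ l * YY * XX ^ (-l) := by simp [βN]

def β : Gn 1 →* FreeGroup (Fin 2) :=
  SemidirectProduct.lift βN ((zpowersHom _) XX) (by
    intro g
    refine FreeGroup.ext_hom _ _ fun l => ?_
    simp only [MonoidHom.comp_apply, MulEquiv.coe_toMonoidHom, A_of, βN_of,
      MulAut.conj_apply, zpowersHom_apply, one_mul]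
    rw [show l + toAdd g = l + toAdd g from rfl]
    group)

@[simp] lemma β_inl (k : FreeGroup ℤ) : β (inl k) = βN k := by simp [β]
@[simp] lemma β_inr (g : Multiplicative ℤ) : β (inr g) = XX ^ toAdd g := by simp [β]

lemma beta_alpha : β.comp α = MonoidHom.id _ := by
  refine FreeGroup.ext_hom _ _ fun i => ?_
  fin_cases i
  · simp [α, XX]
  · simp [α, YY, XX]

lemma alpha_beta : α.comp β = MonoidHom.id _ := by
  refine SemidirectProduct.hom_ext ?_ ?_
  · refine FreeGroup.ext_hom _ _ fun l => ?_
    simp only [MonoidHom.comp_apply, MonoidHom.id_apply, β_inl, βN_of]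
    rw [_root_.map_mul, _root_.map_mul, _root_.map_zpow, _root_.map_zpow, α_X, α_Y]
    rw [← _root_.map_zpow (inr : Multiplicative ℤ →* Gn 1), ← _root_.map_zpow (inr : Multiplicative ℤ →* Gn 1)]
    rw [show (ofAdd (1:ℤ)) ^ l = ofAdd l by rw [← ofAdd_zsmul]; simp, show (ofAdd (1:ℤ)) ^ (-l) = ofAdd (-l) by rw [← ofAdd_zsmul]; simp]
    rw [show (ofAdd (-l)) = (ofAdd l)⁻¹ by simp, ← SemidirectProduct.inl_aut]
    simp
  · exact MonoidHom.ext_mint (by simp)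


/-! ### the rank `m+2` side -/

def genIdx (m : ℕ) (l : ℤ) : Fin (m + 2) :=
  ⟨(l % ((m:ℤ)+1)).toNat, by
    have h1 : 0 ≤ l % ((m:ℤ)+1) := Int.emod_nonneg l (by omega)
    have h2 : l % ((m:ℤ)+1) < (m:ℤ)+1 := Int.emod_lt_of_pos l (by omega)
    omega⟩

lemma genIdx_lt (m : ℕ) (l : ℤ) : ((genIdx m l : Fin (m+2)) : ℕ) < m + 1 := by
  have h1 : 0 ≤ l % ((m:ℤ)+1) := Int.emod_nonneg l (by omega)
  have h2 : l % ((m:ℤ)+1) < (m:ℤ)+1 := Int.emod_lt_of_pos l (by omega)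
  simp only [genIdx]
  omega

lemma genIdx_add (m : ℕ) (l t : ℤ) : genIdx m (l + ((m:ℤ)+1) * t) = genIdx m l := by
  apply Fin.ext
  simp only [genIdx]
  rw [Int.add_mul_emod_self_left]

def gen (m : ℕ) (l : ℤ) : FreeGroup (Fin (m+2)) :=
  (of (Fin.last (m+1))) ^ (l / ((m:ℤ)+1)) * of (genIdx m l) *
    (of (Fin.last (m+1))) ^ (-(l / ((m:ℤ)+1)))

def vN (m : ℕ) : FreeGroup ℤ →* FreeGroup (Fin (m+2)) := FreeGroup.lift (gen m)

@[simp] lemma vN_of (m : ℕ) (l : ℤ) : vN m (of l) = gen m l := by simp [vN]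

def v (m : ℕ) : Gn ((m:ℤ)+1) →* FreeGroup (Fin (m+2)) :=
  SemidirectProduct.lift (vN m) ((zpowersHom _) (of (Fin.last (m+1)))) (by
    intro g
    refine FreeGroup.ext_hom _ _ fun l => ?_
    have hdiv : (l + ((m:ℤ)+1) * toAdd g) / ((m:ℤ)+1) = l / ((m:ℤ)+1) + toAdd g := by
      rw [mul_comm, Int.add_mul_ediv_right _ _ (by omega : ((m:ℤ)+1) ≠ 0)]
    simp only [MonoidHom.comp_apply, MulEquiv.coe_toMonoidHom, A_of, MulAut.conj_apply,
      zpowersHom_apply, vN_of]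
    rw [show gen m (l + ((m:ℤ)+1) * toAdd g)
        = (of (Fin.last (m+1))) ^ (l / ((m:ℤ)+1) + toAdd g) * of (genIdx m l) *
          (of (Fin.last (m+1))) ^ (-(l / ((m:ℤ)+1) + toAdd g)) by
      rw [gen, hdiv, genIdx_add]]
    rw [gen]
    group)

@[simp] lemma v_inl (m : ℕ) (k : FreeGroup ℤ) : v m (inl k) = vN m k := by simp [v]
@[simp] lemma v_inr (m : ℕ) (g : Multiplicative ℤ) :
    v m (inr g) = (of (Fin.last (m+1))) ^ toAdd g := by simp [v]

def u (m : ℕ) : FreeGroup (Fin (m+2)) →* Gn ((m:ℤ)+1) :=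
  FreeGroup.lift fun i => if (i:ℕ) < m+1 then inl (of ((i:ℕ):ℤ)) else inr (ofAdd 1)

lemma u_of_lt (m : ℕ) {i : Fin (m+2)} (h : (i:ℕ) < m+1) : u m (of i) = inl (of ((i:ℕ):ℤ)) := by
  simp [u, h]
  intro h'; omega

lemma u_of_last (m : ℕ) {i : Fin (m+2)} (h : ¬ (i:ℕ) < m+1) : u m (of i) = inr (ofAdd 1) := by
  simp [u, h]
  intro h'; omega

lemma v_u (m : ℕ) : (v m).comp (u m) = MonoidHom.id _ := by
  refine FreeGroup.ext_hom _ _ fun i => ?_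
  simp only [MonoidHom.comp_apply, MonoidHom.id_apply]
  by_cases h : (i:ℕ) < m+1
  · rw [u_of_lt m h, v_inl, vN_of, gen]
    have h0 : ((i:ℕ):ℤ) / ((m:ℤ)+1) = 0 :=
      Int.ediv_eq_zero_of_lt (by positivity) (by exact_mod_cast h)
    have h1 : genIdx m ((i:ℕ):ℤ) = i := by
      apply Fin.ext
      simp only [genIdx]
      have : ((i:ℕ):ℤ) % ((m:ℤ)+1) = ((i:ℕ):ℤ) := Int.emod_eq_of_lt (by positivity) (by exact_mod_cast h)
      omega
    rw [h0, h1]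
    simp
  · rw [u_of_last m h, v_inr]
    have : i = Fin.last (m+1) := Fin.ext (by have := i.isLt; simp only [Fin.val_last]; omega)
    simp [this]

lemma u_v (m : ℕ) : (u m).comp (v m) = MonoidHom.id _ := by
  refine SemidirectProduct.hom_ext ?_ (MonoidHom.ext_mint ?_)
  · refine FreeGroup.ext_hom _ _ fun l => ?_
    simp only [MonoidHom.comp_apply, MonoidHom.id_apply, v_inl, vN_of, gen]
    rw [_root_.map_mul, _root_.map_mul, _root_.map_zpow, _root_.map_zpow,
      u_of_last m (by simp [Fin.val_last]), u_of_lt m (genIdx_lt m l)]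
    rw [← _root_.map_zpow (inr : Multiplicative ℤ →* Gn ((m:ℤ)+1)),
      ← _root_.map_zpow (inr : Multiplicative ℤ →* Gn ((m:ℤ)+1))]
    rw [show (ofAdd (1:ℤ)) ^ (l / ((m:ℤ)+1)) = ofAdd (l / ((m:ℤ)+1)) by rw [← ofAdd_zsmul]; simp,
      show (ofAdd (1:ℤ)) ^ (-(l / ((m:ℤ)+1))) = ofAdd (-(l / ((m:ℤ)+1))) by rw [← ofAdd_zsmul]; simp]
    rw [show (ofAdd (-(l / ((m:ℤ)+1)))) = (ofAdd (l / ((m:ℤ)+1)))⁻¹ by simp, ← SemidirectProduct.inl_aut]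
    congr 1
    rw [A_of]
    congr 1
    have h1 : 0 ≤ l % ((m:ℤ)+1) := Int.emod_nonneg l (by omega)
    have : (((genIdx m l : Fin (m+2)) : ℕ) : ℤ) = l % ((m:ℤ)+1) := by
      simp only [genIdx]
      omega
    rw [this, toAdd_ofAdd, Int.emod_add_mul_ediv]
  · simp only [MonoidHom.comp_apply, MonoidHom.id_apply, v_inr, toAdd_ofAdd, zpow_one]
    exact u_of_last m (by simp [Fin.val_last])

/-! ### the map `w : Gn (m+1) → Gn 1` -/

def w (m : ℕ) : Gn ((m:ℤ)+1) →* Gn 1 :=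
  SemidirectProduct.lift inl
    ((inr : Multiplicative ℤ →* Gn 1).comp ((zpowersHom _) (ofAdd ((m:ℤ)+1)))) (by
    intro g
    refine FreeGroup.ext_hom _ _ fun l => ?_
    simp only [MonoidHom.comp_apply, MulEquiv.coe_toMonoidHom, A_of, MulAut.conj_apply,
      zpowersHom_apply]
    rw [show (ofAdd ((m:ℤ)+1)) ^ toAdd g = ofAdd (((m:ℤ)+1) * toAdd g) by
      rw [← ofAdd_zsmul]; simp [mul_comm]]
    rw [show ((inr (ofAdd (((m:ℤ)+1) * toAdd g)) : Gn 1))⁻¹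
        = inr ((ofAdd (((m:ℤ)+1) * toAdd g))⁻¹) from (_root_.map_inv _ _).symm]
    rw [← SemidirectProduct.inl_aut, A_of]
    simp [mul_comm])

lemma w_apply (m : ℕ) (z : Gn ((m:ℤ)+1)) :
    w m z = inl z.left * inr (ofAdd (((m:ℤ)+1) * toAdd z.right)) := by
  conv_lhs => rw [← SemidirectProduct.inl_left_mul_inr_right z]
  rw [_root_.map_mul]
  rw [show w m (inl z.left) = inl z.left from SemidirectProduct.lift_inl _ _ _ _]
  rw [show w m (inr z.right) = inr ((ofAdd ((m:ℤ)+1)) ^ toAdd z.right) from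
    SemidirectProduct.lift_inr _ _ _ _]
  rw [show (ofAdd ((m:ℤ)+1)) ^ toAdd z.right = ofAdd (((m:ℤ)+1) * toAdd z.right) by
    rw [← ofAdd_zsmul, smul_eq_mul, mul_comm]]

@[simp] lemma w_left (m : ℕ) (z : Gn ((m:ℤ)+1)) : (w m z).left = z.left := by
  rw [w_apply]
  simp only [SemidirectProduct.mul_left, SemidirectProduct.left_inl,
    SemidirectProduct.left_inr, SemidirectProduct.right_inl, map_one, mul_one]
  simp
@[simp] lemma w_right (m : ℕ) (z : Gn ((m:ℤ)+1)) :
    (w m z).right = ofAdd (((m:ℤ)+1) * toAdd z.right) := by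
  rw [w_apply]
  simp only [SemidirectProduct.mul_right, SemidirectProduct.right_inl,
    SemidirectProduct.right_inr, one_mul]

lemma w_injective (m : ℕ) : Function.Injective (w m) := by
  intro a b h
  ext
  · have := congrArg SemidirectProduct.left h
    simpa using this
  · have := congrArg SemidirectProduct.right h
    simp only [w_right] at this
    have h2 := congrArg toAdd this
    simp only [toAdd_ofAdd] at h2
    have h3 : toAdd a.right = toAdd b.right :=
      mul_left_cancel₀ (by omega : ((m:ℤ)+1) ≠ 0) h2
    exact Multiplicative.toAdd.injective h3

lemma mem_range_w (m : ℕ) (x : Gn 1) :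
    x ∈ (w m).range ↔ ((m:ℤ)+1) ∣ toAdd x.right := by
  constructor
  · rintro ⟨z, rfl⟩
    rw [w_right]
    exact ⟨toAdd z.right, by simp [mul_comm]⟩
  · rintro ⟨t, ht⟩
    refine ⟨⟨x.left, ofAdd t⟩, ?_⟩
    rw [w_apply]
    have h1 : (⟨x.left, ofAdd t⟩ : Gn ((m:ℤ)+1)).left = x.left := rfl
    have h2 : (⟨x.left, ofAdd t⟩ : Gn ((m:ℤ)+1)).right = ofAdd t := rfl
    rw [h1, h2, toAdd_ofAdd, ← ht, ofAdd_toAdd, SemidirectProduct.inl_left_mul_inr_right]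


/-! ### the exponent homomorphism and `finRotate` lemmas -/

def D : FreeGroup (Fin 2) →* Multiplicative ℤ :=
  FreeGroup.lift fun i => if i = 0 then ofAdd 1 else 1

lemma rightHom_alpha : (SemidirectProduct.rightHom).comp α = D := by
  refine FreeGroup.ext_hom _ _ fun i => ?_
  fin_cases i <;> simp [α, D]

open Fin.NatCast in
lemma rot_pow (m k : ℕ) (x : Fin (m+1)) :
    ((finRotate (m+1)) ^ k) x = x + (k : Fin (m+1)) := by
  induction k with
  | zero => simp
  | succ k ih =>
    rw [pow_succ', Equiv.Perm.mul_apply, ih, finRotate_succ_apply]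
    push_cast
    rw [add_assoc]

lemma rot_pow_one (m : ℕ) : (finRotate (m+1)) ^ (m+1) = 1 := by
  refine Equiv.ext fun x => ?_
  rw [rot_pow]
  simp

open Fin.NatCast in
lemma rot_fix_nat (m k : ℕ) (x : Fin (m+1)) :
    ((finRotate (m+1)) ^ k) x = x ↔ (m+1) ∣ k := by
  rw [rot_pow, add_eq_left, Fin.natCast_eq_zero]

lemma rot_fix_int (m : ℕ) (z : ℤ) (x : Fin (m+1)) :
    ((finRotate (m+1)) ^ z) x = x ↔ ((m:ℤ)+1) ∣ z := by
  have hz : (finRotate (m+1)) ^ z = (finRotate (m+1)) ^ ((z % ((m:ℤ)+1)).toNat) := by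
    conv_lhs => rw [← Int.mul_ediv_add_emod z ((m:ℤ)+1)]
    rw [zpow_add, zpow_mul]
    rw [show ((finRotate (m+1) : Equiv.Perm (Fin (m+1))) ^ ((m:ℤ)+1)) = 1 by
      rw [show ((m:ℤ)+1) = ((m+1 : ℕ) : ℤ) by push_cast; ring, zpow_natCast, rot_pow_one]]
    rw [one_zpow, one_mul, ← zpow_natCast, Int.toNat_of_nonneg (Int.emod_nonneg z (by omega))]
  rw [hz, rot_fix_nat]
  have h1 : 0 ≤ z % ((m:ℤ)+1) := Int.emod_nonneg z (by omega)
  have h2 : z % ((m:ℤ)+1) < (m:ℤ)+1 := Int.emod_lt_of_pos z (by omega)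
  constructor
  · intro h
    have h3 : (z % ((m:ℤ)+1)).toNat = 0 := Nat.eq_zero_of_dvd_of_lt h (by omega)
    exact Int.dvd_of_emod_eq_zero (by omega)
  · intro h
    have h3 : z % ((m:ℤ)+1) = 0 := Int.emod_eq_zero_of_dvd h
    rw [show (z % ((m:ℤ)+1)).toNat = 0 by omega]
    exact dvd_zero _

end Stmt15Aux

open Stmt15Aux in
/-- Construction A for the free group `F` on `{x, y}` (case of rank 2, no twisting):
for `Θ : F → Sym(Fin n)` with `Θ x = (0 1 ⋯ n-1)` and `Θ y = 1`, the preimage `H`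
of the stabilizer of the point `n - 1` has index `n`, is generated by the `n + 1`
elements `xⁿ` and `xˡ y x⁻ˡ` (`0 ≤ l ≤ n - 1`), and is free of rank `n + 1`. -/
theorem stmt15 (n : ℕ) (hn : 1 ≤ n) :
    let X : FreeGroup (Fin 2) := FreeGroup.of 0
    let Y : FreeGroup (Fin 2) := FreeGroup.of 1
    let Θ : FreeGroup (Fin 2) →* Equiv.Perm (Fin n) :=
      FreeGroup.lift (fun i : Fin 2 => if i = 0 then finRotate n else 1)
    let H : Subgroup (FreeGroup (Fin 2)) :=
      Subgroup.comap Θ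
        (MulAction.stabilizer (Equiv.Perm (Fin n)) (⟨n - 1, by omega⟩ : Fin n))
    H.index = n ∧
      H = Subgroup.closure
          ({X ^ n} ∪ {g | ∃ l : ℕ, l < n ∧ g = X ^ l * Y * (X ^ l)⁻¹}) ∧
      Nonempty (H ≃* FreeGroup (Fin (n + 1))) := by
  intro X Y Θ H
  obtain ⟨m, rfl⟩ : ∃ m, n = m + 1 := ⟨n - 1, by omega⟩
  have hX : X = XX := rfl
  have hY : Y = YY := rfl
  have hΘ : Θ = ((zpowersHom _) (finRotate (m+1))).comp D := by
    refine FreeGroup.ext_hom _ _ fun i => ?_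
    fin_cases i <;> simp [Θ, D, zpowersHom_apply]
  have memH : ∀ g, g ∈ H ↔ ((m:ℤ)+1) ∣ Multiplicative.toAdd (D g) := by
    intro g
    simp only [H, Subgroup.mem_comap, MulAction.mem_stabilizer_iff, hΘ, MonoidHom.comp_apply,
      zpowersHom_apply, Equiv.Perm.smul_def]
    exact rot_fix_int m _ _
  -- the candidate isomorphism source
  set j : FreeGroup (Fin (m+2)) →* FreeGroup (Fin 2) :=
    β.comp ((w m).comp (u m)) with hj
  have hαβ : ∀ z, α (β z) = z := fun z => DFunLike.congr_fun alpha_beta z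
  have hβα : ∀ g, β (α g) = g := fun g => DFunLike.congr_fun beta_alpha g
  have hvu : ∀ g, v m (u m g) = g := fun g => DFunLike.congr_fun (v_u m) g
  have huv : ∀ z, u m (v m z) = z := fun z => DFunLike.congr_fun (u_v m) z
  have hDα : ∀ g, D g = SemidirectProduct.rightHom (α g) :=
    fun g => (DFunLike.congr_fun rightHom_alpha g).symm
  have hrangej : j.range = H := by
    ext x
    constructor
    · rintro ⟨a, rfl⟩
      rw [memH, hDα]
      show ((m:ℤ)+1) ∣ Multiplicative.toAdd (SemidirectProduct.rightHom (α (β ((w m) ((u m) a)))))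
      rw [hαβ, SemidirectProduct.rightHom_eq_right, w_right]
      exact ⟨Multiplicative.toAdd (((u m) a).right), by simp [mul_comm]⟩
    · intro hx
      rw [memH, hDα] at hx
      obtain ⟨z, hz⟩ := (mem_range_w m (α x)).mpr (by
        rwa [SemidirectProduct.rightHom_eq_right] at hx)
      refine ⟨v m z, ?_⟩
      show β ((w m) ((u m) (v m z))) = x
      rw [huv z, hz, hβα]
  -- images of the generators
  have hjof_lt : ∀ (i : Fin (m+2)), (i:ℕ) < m+1 →
      j (FreeGroup.of i) = X ^ (i:ℕ) * Y * (X ^ (i:ℕ))⁻¹ := by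
    intro i h
    show β ((w m) ((u m) (FreeGroup.of i))) = _
    rw [u_of_lt m h,
      show (w m) (SemidirectProduct.inl (FreeGroup.of ((i:ℕ):ℤ)))
        = SemidirectProduct.inl (FreeGroup.of ((i:ℕ):ℤ)) from SemidirectProduct.lift_inl _ _ _ _,
      β_inl, βN_of, hX, hY, zpow_neg, zpow_natCast]
  have hjof_last : ∀ (i : Fin (m+2)), ¬ (i:ℕ) < m+1 → j (FreeGroup.of i) = X ^ (m+1) := by
    intro i h
    show β ((w m) ((u m) (FreeGroup.of i))) = _
    rw [u_of_last m h,
      show (w m) (SemidirectProduct.inr (Multiplicative.ofAdd 1))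
        = SemidirectProduct.inr ((Multiplicative.ofAdd ((m:ℤ)+1)) ^
            Multiplicative.toAdd (Multiplicative.ofAdd (1:ℤ)))
        from SemidirectProduct.lift_inr _ _ _ _]
    rw [toAdd_ofAdd, zpow_one, β_inr, toAdd_ofAdd, hX,
      show ((m:ℤ)+1) = ((m+1 : ℕ) : ℤ) by push_cast; ring, zpow_natCast]
  refine ⟨?_, ?_, ?_⟩
  · -- index
    have hσord : orderOf (finRotate (m+1)) = m+1 := by
      refine Nat.dvd_antisymm (orderOf_dvd_of_pow_eq_one (rot_pow_one m)) ?_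
      exact (rot_fix_nat m (orderOf (finRotate (m+1))) 0).mp
        (by rw [pow_orderOf_eq_one]; rfl)
    have hrange : Θ.range = Subgroup.zpowers (finRotate (m+1)) := by
      apply le_antisymm
      · rintro x ⟨g, rfl⟩
        rw [hΘ]
        exact Subgroup.mem_zpowers_iff.mpr ⟨Multiplicative.toAdd (D g), rfl⟩
      · rw [Subgroup.zpowers_le]
        exact ⟨X, by rw [hΘ]; simp [D, hX, XX, zpowersHom_apply]⟩
    have hbot : (MulAction.stabilizer (Equiv.Perm (Fin (m+1)))
        (⟨m + 1 - 1, by omega⟩ : Fin (m+1))).subgroupOf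
          (Subgroup.zpowers (finRotate (m+1))) = ⊥ := by
      rw [eq_bot_iff]
      rintro ⟨x, hx⟩ hmem
      obtain ⟨k, rfl⟩ := Subgroup.mem_zpowers_iff.mp hx
      rw [Subgroup.mem_subgroupOf] at hmem
      have hk : ((m:ℤ)+1) ∣ k := (rot_fix_int m k _).mp
        (by simpa [Equiv.Perm.smul_def] using hmem)
      obtain ⟨t, rfl⟩ := hk
      rw [Subgroup.mem_bot]
      refine Subtype.ext ?_
      show finRotate (m+1) ^ (((m:ℤ)+1) * t) = 1
      rw [zpow_mul, show ((finRotate (m+1) : Equiv.Perm (Fin (m+1))) ^ ((m:ℤ)+1)) = 1 by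
        rw [show ((m:ℤ)+1) = ((m+1 : ℕ) : ℤ) by push_cast; ring, zpow_natCast, rot_pow_one],
        one_zpow]
    show (Subgroup.comap Θ _).index = m + 1
    rw [Subgroup.index_comap, hrange, Subgroup.relIndex, hbot, Subgroup.index_bot,
      Nat.card_zpowers, hσord]
  · -- generating set
    have hset : Set.range (fun i : Fin (m+2) => j (FreeGroup.of i)) =
        ({X ^ (m+1)} ∪ {g | ∃ l : ℕ, l < m+1 ∧ g = X ^ l * Y * (X ^ l)⁻¹}) := by
      ext g
      simp only [Set.mem_range, Set.mem_union, Set.mem_singleton_iff, Set.mem_setOf_eq]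
      constructor
      · rintro ⟨i, rfl⟩
        by_cases h : (i:ℕ) < m+1
        · exact Or.inr ⟨(i:ℕ), h, hjof_lt i h⟩
        · exact Or.inl (hjof_last i h)
      · rintro (rfl | ⟨l, hl, rfl⟩)
        · exact ⟨Fin.last (m+1), hjof_last _ (by simp)⟩
        · refine ⟨⟨l, by omega⟩, ?_⟩
          rw [hjof_lt ⟨l, by omega⟩ (by simpa using hl)]
    calc H = j.range := hrangej.symm
      _ = Subgroup.map j ⊤ := j.range_eq_map
      _ = Subgroup.map j (Subgroup.closure (Set.range FreeGroup.of)) := by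
          rw [FreeGroup.closure_range_of]
      _ = Subgroup.closure (j '' Set.range FreeGroup.of) := MonoidHom.map_closure _ _
      _ = _ := by rw [← Set.range_comp, Function.comp_def, hset]
  · -- freeness
    have hinj : Function.Injective j := by
      intro a b hab
      have h1 := congrArg α hab
      simp only [hj, MonoidHom.comp_apply] at h1 ⊢
      rw [hαβ, hαβ] at h1
      have h2 := w_injective m h1
      have h3 := congrArg (v m) h2
      rwa [hvu, hvu] at h3
    exact ⟨((MonoidHom.ofInjective hinj).trans (MulEquiv.subgroupCongr hrangej)).symm⟩
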